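/- For every a ∈ ℝ \ {0}, the set Λ_a of complex solutions of the characteristic equation λ − a ∫_{−1}^0 e^{λu} du = 0 is nonempty. -/

import Mathlib

set_option maxHeartbeats 1000000


open MeasureTheory

/-- The characteristic function `h_a(λ) = λ − a ∫_{−1}^0 e^{λu} du`. -/
noncomputable def charFn (a : ℝ) (lam : ℂ) : ℂ :=
  lam - a * ∫ u in (-1:ℝ)..0, Complex.exp (lam * u)

/-- The set `Λ_a` of complex solutions of the characteristic equation. -/
def charRoots (a : ℝ) : Set ℂ := {lam | charFn a lam = 0}

open Complex Set Metric

private lemma charFn_eq (a : ℝ) {lam : ℂ} (h : lam ≠ 0) :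
    charFn a lam = (lam ^ 2 - a * (1 - Complex.exp (-lam))) / lam := by
  rw [charFn, integral_exp_mul_complex h]
  push_cast
  field_simp
  ring_nf
  simp only [Complex.exp_zero, mul_one]

private lemma root_of_eq (a : ℝ) {lam : ℂ} (h0 : lam ≠ 0)
    (h : lam ^ 2 - (a : ℂ) * (1 - Complex.exp (-lam)) = 0) : (charRoots a).Nonempty := by
  refine ⟨lam, ?_⟩
  show charFn a lam = 0
  rw [charFn_eq a h0, h, zero_div]

private lemma pos_case {a : ℝ} (ha : 0 < a) : (charRoots a).Nonempty := by
  set ψ : ℝ → ℝ := fun x => x ^ 2 - a * (1 - Real.exp (-x)) with hψ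
  set x₀ : ℝ := min 1 (a / 3) with hx₀def
  have hx₀ : 0 < x₀ := lt_min one_pos (by linarith)
  have hx₀1 : x₀ ≤ 1 := min_le_left _ _
  have hx₀a : x₀ ≤ a / 3 := min_le_right _ _
  have h1 : Real.exp (-x₀) * (1 + x₀) ≤ 1 := by
    have h2 : (1 : ℝ) + x₀ ≤ Real.exp x₀ := by
      have := Real.add_one_le_exp x₀; linarith
    have h3 : Real.exp (-x₀) * (1 + x₀) ≤ Real.exp (-x₀) * Real.exp x₀ :=
      mul_le_mul_of_nonneg_left h2 (Real.exp_pos _).le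
    rwa [← Real.exp_add, neg_add_cancel, Real.exp_zero] at h3
  have hψ0 : ψ x₀ ≤ 0 := by
    have he : 0 < Real.exp (-x₀) := Real.exp_pos _
    simp only [hψ]
    nlinarith [mul_pos hx₀ hx₀, mul_le_mul_of_nonneg_left h1 ha.le]
  have hψ1 : 0 ≤ ψ (a + 1) := by
    have he : 0 < Real.exp (-(a + 1)) := Real.exp_pos _
    simp only [hψ]
    nlinarith
  have hle : x₀ ≤ a + 1 := by linarith
  have hc : ContinuousOn ψ (Icc x₀ (a + 1)) := by fun_prop
  obtain ⟨x, hxmem, hx⟩ := intermediate_value_Icc hle hc ⟨hψ0, hψ1⟩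
  have hxpos : 0 < x := lt_of_lt_of_le hx₀ hxmem.1
  refine root_of_eq a (lam := (x : ℂ)) ?_ ?_
  · exact_mod_cast ofReal_ne_zero.mpr hxpos.ne'
  · have : ((ψ x : ℝ) : ℂ) = (x : ℂ) ^ 2 - (a : ℂ) * (1 - Complex.exp (-(x : ℂ))) := by
      simp only [hψ]
      push_cast [Complex.ofReal_exp]
      ring
    rw [← this, hx, Complex.ofReal_zero]

private lemma neg_case {a : ℝ} (ha : a < 0) : (charRoots a).Nonempty := by
  set b : ℝ := -a with hbdef
  have hb0 : 0 < b := by rw [hbdef]; linarith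
  have hbC : (b : ℂ) ≠ 0 := ofReal_ne_zero.mpr hb0.ne'
  set n : ℕ := ⌈b + b⁻¹⌉₊ + 2000 with hndef
  set N : ℝ := (n : ℝ) with hNdef
  have hN2000 : (2000 : ℝ) ≤ N := by
    rw [hNdef, hndef]; exact_mod_cast Nat.le_add_left 2000 _
  have hceil : b + b⁻¹ ≤ N := by
    have h1 : b + b⁻¹ ≤ (⌈b + b⁻¹⌉₊ : ℝ) := Nat.le_ceil _
    have h2 : ((⌈b + b⁻¹⌉₊ : ℕ) : ℝ) ≤ N := by
      rw [hNdef, hndef]; exact_mod_cast Nat.le_add_right _ 2000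
    linarith
  have hbN : b ≤ N := by have := inv_pos.mpr hb0; linarith
  have hbinvN : b⁻¹ ≤ N := by linarith
  have hNbig : 1 ≤ b * N := by
    calc (1:ℝ) = b * b⁻¹ := by field_simp
    _ ≤ b * N := mul_le_mul_of_nonneg_left hbinvN hb0.le
  have hNN : 2000 * N ≤ N ^ 2 := by
    have h := mul_le_mul_of_nonneg_right hN2000 (by linarith : (0:ℝ) ≤ N); rw [sq]; exact h
  have hπl : 3.1415 ≤ Real.pi := by linarith [Real.pi_gt_d6]
  have hπu : Real.pi ≤ 3.15 := by linarith [Real.pi_lt_d2]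
  set c : ℝ := (2 * N - 1) * Real.pi with hcdef
  set r : ℝ := Real.pi * N with hrdef
  have hr0 : 0 < r := by
    rw [hrdef]; exact mul_pos Real.pi_pos (by linarith)
  set z₀ : ℂ := (c : ℝ) * I with hz₀def
  set s : Set ℂ := Metric.closedBall z₀ r with hsdef
  set v : ℂ → ℂ := fun z => -(z ^ 2 + (b : ℂ)) / (b : ℂ) with hvdef
  set T : ℂ → ℂ := fun z => z₀ - Complex.log (v z) with hTdef
  clear_value b n N c r z₀ v T
  have hc0 : 0 < c := by
    rw [hcdef]; exact mul_pos (by linarith) Real.pi_pos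
  have hz₀norm : ‖z₀‖ = c := by
    rw [hz₀def, norm_mul, Complex.norm_I, Complex.norm_real, mul_one,
      Real.norm_eq_abs, abs_of_pos hc0]
  have hz₀im : z₀.im = c := by simp [hz₀def]
  have hcr1 : c - r = (N - 1) * Real.pi := by rw [hcdef, hrdef]; ring
  have hcr2 : c + r = (3 * N - 1) * Real.pi := by rw [hcdef, hrdef]; ring
  -- key estimates on the ball
  have key : ∀ z ∈ s, (N - 1) * Real.pi ≤ ‖z‖ ∧ ‖z‖ ≤ 12 * N ∧
      3 * N ^ 2 ≤ ‖z ^ 2 + (b : ℂ)‖ ∧ ‖z ^ 2 + (b : ℂ)‖ ≤ 145 * N ^ 2 ∧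
      (N - 1) * Real.pi ≤ z.im := by
    intro z hz
    have hdist : ‖z - z₀‖ ≤ r := by
      rw [hsdef, Metric.mem_closedBall, dist_eq_norm] at hz; exact hz
    have hlow : (N - 1) * Real.pi ≤ ‖z‖ := by
      have h1 : ‖z₀‖ - ‖z₀ - z‖ ≤ ‖z‖ := by
        have := norm_sub_norm_le z₀ z; linarith
      have h2 : ‖z₀ - z‖ = ‖z - z₀‖ := norm_sub_rev _ _
      rw [hz₀norm, h2] at h1
      linarith
    have hup : ‖z‖ ≤ 12 * N := by
      have h1 : ‖z‖ ≤ ‖z₀‖ + ‖z - z₀‖ := by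
        have := norm_add_le z₀ (z - z₀); simpa using this
      rw [hz₀norm] at h1
      have h3 : (3 * N - 1) * Real.pi ≤ (3 * N - 1) * 3.15 :=
        mul_le_mul_of_nonneg_left hπu (by linarith)
      nlinarith
    have hnb : ‖(b:ℂ)‖ = b := by
      rw [Complex.norm_real, Real.norm_eq_abs, abs_of_pos hb0]
    have h3l : 3 * (N - 1) ≤ ‖z‖ := by nlinarith
    have h9 : 9 * (N - 1) ^ 2 ≤ ‖z‖ ^ 2 := by nlinarith
    have hsqlow : 3 * N ^ 2 ≤ ‖z ^ 2 + (b : ℂ)‖ := by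
      have h1 : ‖z ^ 2‖ - ‖-(b:ℂ)‖ ≤ ‖z ^ 2 - -(b:ℂ)‖ := norm_sub_norm_le _ _
      rw [sub_neg_eq_add, norm_neg, hnb, norm_pow] at h1
      nlinarith
    have hsqup : ‖z ^ 2 + (b : ℂ)‖ ≤ 145 * N ^ 2 := by
      have h1 : ‖z ^ 2 + (b:ℂ)‖ ≤ ‖z ^ 2‖ + ‖(b:ℂ)‖ := norm_add_le _ _
      rw [hnb, norm_pow] at h1
      have h144 : ‖z‖ ^ 2 ≤ 144 * N ^ 2 := by nlinarith [norm_nonneg z]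
      nlinarith
    have him : (N - 1) * Real.pi ≤ z.im := by
      have h1 : |(z - z₀).im| ≤ ‖z - z₀‖ := Complex.abs_im_le_norm _
      have h2 : (z - z₀).im = z.im - c := by rw [Complex.sub_im, hz₀im]
      rw [h2] at h1
      have h3 := (abs_le.mp (h1.trans hdist)).1
      linarith
    exact ⟨hlow, hup, hsqlow, hsqup, him⟩
  have hslit : ∀ z ∈ s, v z ∈ Complex.slitPlane := by
    intro z hz
    obtain ⟨h1, h2, h3, h4, him⟩ := key z hz
    have himpos : 0 < z.im := by nlinarith
    rw [Complex.mem_slitPlane_iff]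
    have hre : (v z).re = -(z.re * z.re - z.im * z.im + b) / b := by
      rw [hvdef]
      simp [sq, Complex.mul_re, Complex.div_ofReal_re]
    have him' : (v z).im = -(z.re * z.im + z.im * z.re) / b := by
      rw [hvdef]
      simp [sq, Complex.mul_im, Complex.div_ofReal_im]
    by_cases hx : z.re = 0
    · left
      rw [hre, hx]
      have h5 : 3 * (N - 1) ≤ z.im := by nlinarith
      have h6 : 0 < z.im * z.im - b := by nlinarith
      have h0 : -(0 * 0 - z.im * z.im + b) = z.im * z.im - b := by ring
      rw [h0]
      positivity
    · right
      rw [him']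
      intro hcon
      rw [div_eq_zero_iff] at hcon
      rcases hcon with hcon | hcon
      · have : z.re * z.im = 0 := by linarith [hcon]; 
        rcases mul_eq_zero.mp this with h | h
        · exact hx h
        · exact himpos.ne' h
      · exact hb0.ne' (by exact_mod_cast hcon)
  have hvne0 : ∀ z ∈ s, z ^ 2 + (b : ℂ) ≠ 0 := by
    intro z hz hcon
    obtain ⟨-, -, h3, -, -⟩ := key z hz
    rw [hcon, norm_zero] at h3
    nlinarith
  have hderiv : ∀ z ∈ s, HasDerivAt T (-(2 * z / (z ^ 2 + (b : ℂ)))) z := by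
    intro z hz
    have hv : HasDerivAt v (-(2 * z) / (b : ℂ)) z := by
      have h := ((hasDerivAt_pow 2 z).add_const ((b : ℂ))).neg.div_const ((b : ℂ))
      rw [hvdef]
      simpa using h
    have hlog := (Complex.hasDerivAt_log (hslit z hz)).comp z hv
    have hT : HasDerivAt T (-((v z)⁻¹ * (-(2 * z) / (b : ℂ)))) z := by
      rw [hTdef]
      exact HasDerivAt.const_sub z₀ hlog
    have hzb := hvne0 z hz
    have hne : -(z ^ 2 + (b:ℂ)) ≠ 0 := neg_ne_zero.mpr hzb
    have hvz : v z = -(z ^ 2 + (b:ℂ)) / (b:ℂ) := by rw [hvdef]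
    have heq : -((v z)⁻¹ * (-(2 * z) / (b : ℂ))) = -(2 * z / (z ^ 2 + (b:ℂ))) := by
      rw [hvz, inv_div, div_mul_div_comm]
      congr 1
      rw [div_eq_div_iff (mul_ne_zero hne hbC) hzb]
      ring
    rw [← heq]
    exact hT
  have hbound : ∀ z ∈ s, ‖-(2 * z / (z ^ 2 + (b : ℂ)))‖₊ ≤ (1/2 : NNReal) := by
    intro z hz
    obtain ⟨h1, h2, h3, h4, -⟩ := key z hz
    rw [← NNReal.coe_le_coe, coe_nnnorm]
    have hc2 : ((1/2 : NNReal) : ℝ) = 1/2 := by norm_num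
    rw [hc2]
    have hpos : (0:ℝ) < ‖z ^ 2 + (b:ℂ)‖ := by nlinarith
    rw [norm_neg, norm_div, norm_mul]
    rw [div_le_iff₀ hpos]
    have h2n : ‖(2:ℂ)‖ = 2 := by norm_num
    rw [h2n]
    nlinarith
  have hconv : Convex ℝ s := convex_closedBall z₀ r
  have hlip : LipschitzOnWith (1/2 : NNReal) T s :=
    hconv.lipschitzOnWith_of_nnnorm_hasDerivWithin_le
      (fun z hz => (hderiv z hz).hasDerivWithinAt) hbound
  have hmaps : Set.MapsTo T s s := by
    intro z hz
    obtain ⟨h1, h2, h3, h4, -⟩ := key z hz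
    have habs : ‖v z‖ = ‖z ^ 2 + (b : ℂ)‖ / b := by
      rw [hvdef]
      simp only [norm_div, norm_neg, Complex.norm_real, Real.norm_eq_abs, abs_of_pos hb0]
    have habs_low : (1:ℝ) ≤ ‖v z‖ := by
      rw [habs, le_div_iff₀ hb0]; nlinarith
    have habs_up : ‖v z‖ ≤ 145 * N ^ 3 := by
      rw [habs, div_le_iff₀ hb0]
      have hkey : 145 * N ^ 2 ≤ 145 * N ^ 3 * b := by
        nlinarith [mul_nonneg (by positivity : (0:ℝ) ≤ 145 * N^2)
          (by linarith : (0:ℝ) ≤ b * N - 1)]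
      linarith
    have hlog_re : Real.log (‖v z‖) ≤ 3 * N + 141 := by
      calc Real.log (‖v z‖) ≤ Real.log (145 * N ^ 3) :=
            Real.log_le_log (by nlinarith) habs_up
        _ = Real.log 145 + 3 * Real.log N := by
            rw [Real.log_mul (by norm_num) (by positivity), Real.log_pow]; push_cast; ring
        _ ≤ 144 + 3 * (N - 1) := by
            have l1 : Real.log 145 ≤ 144 := by
              have := Real.log_le_sub_one_of_pos (x := (145:ℝ)) (by norm_num); linarith
            have l2 : Real.log N ≤ N - 1 := Real.log_le_sub_one_of_pos (by linarith)
            linarith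
        _ ≤ 3 * N + 141 := by linarith
    have hnorm : ‖Complex.log (v z)‖ ≤ r := by
      have hs1 := Complex.norm_le_abs_re_add_abs_im (Complex.log (v z))
      rw [Complex.log_re, Complex.log_im] at hs1
      have harg : |(v z).arg| ≤ Real.pi := Complex.abs_arg_le_pi _
      have hre : |Real.log (‖v z‖)| = Real.log (‖v z‖) :=
        abs_of_nonneg (Real.log_nonneg habs_low)
      rw [hre] at hs1
      rw [hrdef]
      have hπN : 3.1415 * N ≤ Real.pi * N := mul_le_mul_of_nonneg_right hπl (by linarith)
      nlinarith
    rw [hsdef, Metric.mem_closedBall, dist_eq_norm]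
    have hTz : T z - z₀ = -(Complex.log (v z)) := by rw [hTdef]; ring
    rw [hTz, norm_neg]
    exact hnorm
  have hsc : IsComplete s := Metric.isClosed_closedBall.isComplete
  have hcontr : ContractingWith (1/2 : NNReal) (hmaps.restrict T s s) :=
    ⟨by rw [← NNReal.coe_lt_coe]; norm_num, hlip.mapsToRestrict hmaps⟩
  have hz₀s : z₀ ∈ s := Metric.mem_closedBall_self hr0.le
  obtain ⟨y, hys, hyfix, -, -⟩ :=
    ContractingWith.exists_fixedPoint' hsc hmaps hcontr hz₀s (edist_ne_top _ _)
  obtain ⟨hy1, -, -, -, -⟩ := key y hys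
  have hy0 : y ≠ 0 := by
    intro h
    rw [h, norm_zero] at hy1
    have := mul_pos (show (0:ℝ) < N - 1 by linarith) Real.pi_pos
    linarith
  have hvy : v y ≠ 0 := Complex.slitPlane_ne_zero (hslit y hys)
  have hTy : T y = y := hyfix
  rw [hTdef] at hTy
  simp only at hTy
  have hlogy : Complex.log (v y) = z₀ - y := by linear_combination -hTy
  have hexp : v y = Complex.exp (z₀ - y) := by
    rw [← hlogy, Complex.exp_log hvy]
  have hz₀exp : Complex.exp z₀ = -1 := by
    have h1 : z₀ = (n : ℂ) * (2 * (Real.pi : ℂ) * I) + (-((Real.pi : ℂ) * I)) := by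
      rw [hz₀def, hcdef, hNdef]
      push_cast
      ring
    rw [h1, Complex.exp_add, Complex.exp_nat_mul_two_pi_mul_I, Complex.exp_neg,
      Complex.exp_pi_mul_I]
    norm_num
  have hexp2 : v y = -Complex.exp (-y) := by
    rw [hexp, sub_eq_add_neg, Complex.exp_add, hz₀exp]
    ring
  refine root_of_eq a hy0 ?_
  have haC : (a : ℂ) = -(b : ℂ) := by rw [hbdef]; push_cast; ring
  rw [haC]
  rw [hvdef] at hexp2
  simp only at hexp2
  rw [div_eq_iff hbC] at hexp2
  linear_combination -hexp2

theorem charRoots_nonempty (a : ℝ) (ha : a ≠ 0) : (charRoots a).Nonempty := by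
  rcases ha.lt_or_gt with h | h
  · exact neg_case h
  · exact pos_case h
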